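/- Let $C^*$ be a cochain complex of $q$-adically complete modules over $A_R = \mathbb{C}[u,t][[q]]/(ut-q)$ that are $q$-torsion-free in each degree. If each cohomology group of $C^*/qC^*$ is finitely generated over $A = \mathbb{C}[u,t]/(ut)$, then each cohomology group of $C^*$ is finitely generated over $A_R$. -/

import Mathlib

set_option synthInstance.maxHeartbeats 1000000
set_option maxHeartbeats 1000000

noncomputable section

/-- Polynomials `ℂ[u,t]` with `u = X 0`, `t = X 1`. -/
abbrev Pol2 : Type := MvPolynomial (Fin 2) ℂ

/-- The ring `A_R = ℂ[u,t][[q]]/(ut - q)`. -/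
abbrev ARing : Type :=
  (PowerSeries Pol2) ⧸
    (Ideal.span {(PowerSeries.C : Pol2 →+* PowerSeries Pol2) (MvPolynomial.X 0 * MvPolynomial.X 1) - PowerSeries.X})

instance : Algebra ℂ ARing := Ideal.Quotient.algebra ℂ
instance : Module ℂ ARing := Algebra.toModule

/-- The element `u` of `A_R`. -/
def uA : ARing := Ideal.Quotient.mk _ ((PowerSeries.C : Pol2 →+* PowerSeries Pol2) (MvPolynomial.X 0))

/-- The element `t` of `A_R`. -/
def tA : ARing := Ideal.Quotient.mk _ ((PowerSeries.C : Pol2 →+* PowerSeries Pol2) (MvPolynomial.X 1))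

/-- The element `q` of `A_R`. -/
def qA : ARing := Ideal.Quotient.mk _ (PowerSeries.X : PowerSeries Pol2)

section Helpers

open Submodule PowerSeries

lemma mem_span_smul_top_iff {R : Type*} [CommRing R] {M : Type*} [AddCommGroup M] [Module R M]
    (r : R) (x : M) :
    x ∈ Ideal.span {r} • (⊤ : Submodule R M) ↔ ∃ y, x = r • y := by
  rw [Submodule.ideal_span_singleton_smul]
  constructor
  · intro h
    obtain ⟨y, -, rfl⟩ := Set.mem_smul_set.mp h
    exact ⟨y, rfl⟩
  · rintro ⟨y, rfl⟩
    exact Submodule.smul_mem_pointwise_smul y r ⊤ trivial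

lemma mem_span_pow_smul_top_iff {R : Type*} [CommRing R] {M : Type*} [AddCommGroup M] [Module R M]
    (r : R) (n : ℕ) (x : M) :
    x ∈ (Ideal.span {r}) ^ n • (⊤ : Submodule R M) ↔ ∃ y, x = r ^ n • y := by
  rw [Ideal.span_singleton_pow, mem_span_smul_top_iff]

abbrev PS : Type := PowerSeries Pol2
abbrev mkPS : PS →+* ARing := Ideal.Quotient.mk _
abbrev RBar : Type := ARing ⧸ Ideal.span {qA}
abbrev mkR : ARing →+* RBar := Ideal.Quotient.mk _

lemma precARing : IsPrecomplete (Ideal.span {qA}) ARing := by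
  constructor
  intro f hf
  have step : ∀ m : ℕ, ∃ k : PS, f (m + 1) - f m = mkPS (k * X ^ m) := by
    intro m
    have h1 : f m ≡ f (m+1) [SMOD ((Ideal.span {qA}) ^ m • ⊤ : Submodule ARing ARing)] :=
      hf (Nat.le_succ m)
    have h2 := (SModEq.sub_mem).mp h1.symm
    rw [Ideal.span_singleton_pow] at h2
    have h3 : qA ^ m ∣ f (m+1) - f m := by
      rw [← Ideal.mem_span_singleton]
      simpa [smul_eq_mul, Ideal.mul_top] using h2
    obtain ⟨c, hc⟩ := h3
    obtain ⟨k, rfl⟩ := Ideal.Quotient.mk_surjective c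
    refine ⟨k, ?_⟩
    rw [hc]
    simp [qA, mul_comm, map_pow]
  choose k hk using step
  obtain ⟨l0, hl0⟩ := Ideal.Quotient.mk_surjective (f 0)
  set g : ℕ → PS := fun n => l0 + ∑ j ∈ Finset.range n, k j * X ^ j with hg
  have hgf : ∀ n, mkPS (g n) = f n := by
    intro n
    induction n with
    | zero => simp [hg, hl0]
    | succ n ih =>
      have : g (n+1) = g n + k n * X ^ n := by
        simp [hg, Finset.sum_range_succ, add_assoc]
      rw [this, map_add, ih, ← hk n]
      ring
  have hdiff : ∀ m n, m ≤ n → (X : PS) ^ m ∣ g n - g m := by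
    intro m n hmn
    have : g n - g m = ∑ j ∈ Finset.Ico m n, k j * X ^ j := by
      simp only [hg]
      rw [← Finset.sum_range_add_sum_Ico _ hmn]
      ring
    rw [this]
    apply Finset.dvd_sum
    intro j hj
    exact Dvd.dvd.mul_left (pow_dvd_pow X (Finset.mem_Ico.mp hj).1) _
  set L' : PS := PowerSeries.mk (fun n => PowerSeries.coeff n (g (n+1))) with hL'
  have hLdvd : ∀ n, (X : PS) ^ n ∣ L' - g n := by
    intro n
    rw [X_pow_dvd_iff]
    intro m hm
    have h1 : (PowerSeries.coeff m) (g n - g (m+1)) = 0 := by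
      have := hdiff (m+1) n hm
      rw [X_pow_dvd_iff] at this
      exact this m (Nat.lt_succ_self m)
    have h2 : (PowerSeries.coeff m) (g n) = (PowerSeries.coeff m) (g (m+1)) := by
      have h1' : (PowerSeries.coeff m) (g n) - (PowerSeries.coeff m) (g (m+1)) = 0 := by
        rw [← map_sub]; exact h1
      exact sub_eq_zero.mp h1'
    simp [hL', h2]
  refine ⟨mkPS L', fun n => ?_⟩
  rw [SModEq.sub_mem]
  rw [Ideal.span_singleton_pow]
  have : qA ^ n ∣ f n - mkPS L' := by
    rw [← hgf n, ← map_sub]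
    have : (X : PS) ^ n ∣ g n - L' := by
      have := (hLdvd n).neg_right
      simpa using this
    obtain ⟨c, hc⟩ := this
    exact ⟨mkPS c, by rw [hc]; simp [qA, map_pow]⟩
  simpa [smul_eq_mul, Ideal.mul_top, Ideal.mem_span_singleton] using this

lemma noethRBar : IsNoetherianRing RBar := by
  have hsurj : Function.Surjective (mkR.comp (mkPS.comp (PowerSeries.C : Pol2 →+* PS))) := by
    intro x
    obtain ⟨a, rfl⟩ := Ideal.Quotient.mk_surjective x
    obtain ⟨ff, rfl⟩ := Ideal.Quotient.mk_surjective a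
    set a0 : Pol2 := PowerSeries.constantCoeff ff with ha0
    refine ⟨a0, ?_⟩
    have hdvd : (X : PS) ∣ ff - PowerSeries.C a0 := by
      rw [X_dvd_iff]; simp [ha0]
    obtain ⟨c, hc⟩ := hdvd
    have hff : ff = PowerSeries.C a0 + X * c := by
      rw [← hc]; ring
    have hq : mkR (mkPS (X : PS)) = 0 := by
      apply Ideal.Quotient.eq_zero_iff_mem.mpr
      exact Ideal.subset_span rfl
    show mkR (mkPS (PowerSeries.C a0)) = mkR (mkPS ff)
    conv_rhs => rw [hff]
    simp only [map_add, map_mul, hq]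
    ring
  exact isNoetherianRing_of_surjective Pol2 RBar _ hsurj

end Helpers

open Submodule

/-- Let `C*` be a cochain complex of `q`-adically complete, `q`-torsion-free modules over
`A_R = ℂ[u,t][[q]]/(ut-q)`.  If each cohomology group of `C*/qC*` is finitely generated
over `A = A_R/(q)`, then each cohomology group of `C*` is finitely generated over `A_R`.
(Finite generation of `H^{i+1}` is phrased as: there is a finite set of closed elements
whose classes generate the cohomology.) -/
theorem stmt12
    (C : ℤ → Type) [∀ i, AddCommGroup (C i)] [∀ i, Module ARing (C i)]
    (d : ∀ i, C i →ₗ[ARing] C (i + 1))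
    (hd : ∀ i (x : C i), d (i + 1) (d i x) = 0)
    (htf : ∀ i (x : C i), qA • x = 0 → x = 0)
    (hcomp : ∀ i, IsAdicComplete (Ideal.span {qA}) (C i))
    (hfg0 : ∀ i : ℤ, ∃ s : Finset (C (i + 1)),
        (∀ x ∈ s, ∃ x', d (i + 1) x = qA • x') ∧
        ∀ x : C (i + 1), (∃ x', d (i + 1) x = qA • x') →
          x ∈ Submodule.span ARing (s : Set (C (i + 1))) ⊔ LinearMap.range (d i)
              ⊔ Ideal.span {qA} • (⊤ : Submodule ARing (C (i + 1)))) :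
    ∀ i : ℤ, ∃ s : Finset (C (i + 1)),
      (∀ x ∈ s, d (i + 1) x = 0) ∧
      ∀ x : C (i + 1), d (i + 1) x = 0 →
        x ∈ Submodule.span ARing (s : Set (C (i + 1))) ⊔ LinearMap.range (d i) := by
  classical
  intro i
  obtain ⟨s, hs1, hs2⟩ := hfg0 i
  set I : Ideal ARing := Ideal.span {qA} with hI
  set K : Submodule ARing (C (i+1)) := LinearMap.range (d i) ⊔ I • ⊤ with hK
  have hs2' : ∀ x : C (i+1), d (i+1) x = 0 →
      x ∈ Submodule.span ARing (s : Set (C (i+1))) ⊔ K := by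
    intro x hx
    have := hs2 x ⟨0, by rw [hx]; simp⟩
    rwa [sup_assoc] at this
  set π : C (i+1) →ₗ[ARing] (C (i+1) ⧸ K) := K.mkQ with hπdef
  have hqK : ∀ x : C (i+1), qA • x ∈ K := by
    intro x
    apply Submodule.mem_sup_right
    rw [hI, mem_span_smul_top_iff]
    exact ⟨x, rfl⟩
  have htor : Module.IsTorsionBy ARing (C (i+1) ⧸ K) qA := by
    intro x
    obtain ⟨y, rfl⟩ := K.mkQ_surjective x
    show qA • K.mkQ y = 0
    rw [← map_smul]
    rw [Submodule.mkQ_apply]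
    exact (Submodule.Quotient.mk_eq_zero K).mpr (hqK y)
  letI : Module RBar (C (i+1) ⧸ K) := htor.module
  have hmk_smul : ∀ (b : ARing) (x : C (i+1) ⧸ K), (mkR b) • x = b • x := fun b x =>
    htor.mk_smul b x
  have hspan_eq : ∀ S : Set (C (i+1) ⧸ K), ∀ x : C (i+1) ⧸ K,
      x ∈ Submodule.span ARing S ↔ x ∈ Submodule.span RBar S := by
    intro S x
    constructor
    · intro hx
      refine Submodule.span_induction (fun y hy => Submodule.subset_span hy)
        (Submodule.zero_mem _) (fun y z _ _ hy hz => Submodule.add_mem _ hy hz) ?_ hx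
      intro a y _ hy
      rw [← hmk_smul a y]
      exact Submodule.smul_mem _ _ hy
    · intro hx
      refine Submodule.span_induction (fun y hy => Submodule.subset_span hy)
        (Submodule.zero_mem _) (fun y z _ _ hy hz => Submodule.add_mem _ hy hz) ?_ hx
      intro a y _ hy
      obtain ⟨b, rfl⟩ := Ideal.Quotient.mk_surjective a
      rw [hmk_smul b y]
      exact Submodule.smul_mem _ _ hy
  set Zsub : Submodule ARing (C (i+1)) := LinearMap.ker (d (i+1)) with hZsub
  set ZQ : Submodule ARing (C (i+1) ⧸ K) := Zsub.map π with hZQ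
  set ZQ' : Submodule RBar (C (i+1) ⧸ K) := Submodule.span RBar (ZQ : Set _) with hZQ'def
  have hZQ'mem : ∀ x, x ∈ ZQ' → x ∈ ZQ := by
    intro x hx
    refine Submodule.span_induction (fun y hy => hy) (Submodule.zero_mem _)
      (fun y z _ _ hy hz => Submodule.add_mem _ hy hz) ?_ hx
    intro a y _ hy
    obtain ⟨b, rfl⟩ := Ideal.Quotient.mk_surjective a
    rw [hmk_smul b y]
    exact Submodule.smul_mem _ _ hy
  set SQ' : Submodule RBar (C (i+1) ⧸ K) := Submodule.span RBar (π '' s) with hSQ'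
  have hSQfg : SQ'.FG := ⟨Finset.image π s, by rw [Finset.coe_image]⟩
  have hZle : ZQ' ≤ SQ' := by
    rw [hZQ'def]
    apply Submodule.span_le.mpr
    rintro x ⟨z, hz, rfl⟩
    have hzker : d (i+1) z = 0 := hz
    have h1 := hs2' z hzker
    rw [Submodule.mem_sup] at h1
    obtain ⟨w, hw, kk, hkk, rfl⟩ := h1
    have hk0 : π kk = 0 := by
      rw [hπdef, Submodule.mkQ_apply]
      exact (Submodule.Quotient.mk_eq_zero K).mpr hkk
    have hπw : π (w + kk) = π w := by rw [map_add, hk0, add_zero]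
    rw [hπw]
    have hmem : π w ∈ Submodule.span ARing (π '' (s : Set (C (i+1)))) := by
      rw [← Submodule.map_span]
      exact Submodule.mem_map_of_mem hw
    exact (hspan_eq (π '' s) (π w)).mp hmem
  haveI := noethRBar
  haveI : IsNoetherian RBar SQ' := isNoetherian_of_fg_of_noetherian SQ' hSQfg
  have hZQfg : ZQ'.FG := by
    have h1 : (ZQ'.comap SQ'.subtype).FG := IsNoetherian.noetherian _
    have h2 := h1.map SQ'.subtype
    rwa [Submodule.map_comap_subtype, inf_eq_right.mpr hZle] at h2
  obtain ⟨T, hT⟩ := hZQfg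
  have hliftT : ∀ y ∈ T, ∃ z : C (i+1), d (i+1) z = 0 ∧ π z = y := by
    intro y hy
    have h1 : y ∈ ZQ := hZQ'mem y (hT ▸ Submodule.subset_span hy)
    obtain ⟨z, hz, rfl⟩ := h1
    exact ⟨z, hz, rfl⟩
  choose lft hlft1 hlft2 using hliftT
  set s' : Finset (C (i+1)) := T.attach.image (fun y => lft y.1 y.2) with hs'def
  have hs'co : ∀ x ∈ s', d (i+1) x = 0 := by
    intro x hx
    rw [hs'def, Finset.mem_image] at hx
    obtain ⟨y, _, rfl⟩ := hx
    exact hlft1 y.1 y.2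
  have hπs' : π '' (s' : Set (C (i+1))) = (T : Set (C (i+1) ⧸ K)) := by
    ext y
    constructor
    · rintro ⟨x, hx, rfl⟩
      rw [hs'def] at hx
      simp only [Finset.coe_image, Set.mem_image, Finset.mem_coe, Finset.mem_attach] at hx
      obtain ⟨w, _, rfl⟩ := hx
      rw [hlft2 w.1 w.2]
      exact w.2
    · intro hy
      refine ⟨lft y hy, ?_, hlft2 y hy⟩
      rw [hs'def]
      simp only [Finset.coe_image, Set.mem_image, Finset.mem_coe, Finset.mem_attach]
      exact ⟨⟨y, hy⟩, by simp, rfl⟩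
  have hgen : ∀ z : C (i+1), d (i+1) z = 0 →
      z ∈ Submodule.span ARing (s' : Set (C (i+1))) ⊔ K := by
    intro z hz
    have h1 : π z ∈ ZQ := ⟨z, hz, rfl⟩
    have h2 : π z ∈ Submodule.span RBar (T : Set (C (i+1) ⧸ K)) := by
      rw [hT]; exact Submodule.subset_span h1
    have h3 : π z ∈ Submodule.span ARing (π '' (s' : Set (C (i+1)))) := by
      rw [hπs']
      exact (hspan_eq (T : Set (C (i+1) ⧸ K)) (π z)).mpr h2
    rw [← Submodule.map_span] at h3
    obtain ⟨w, hw, hww⟩ := h3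
    have hsub : z - w ∈ K := by
      have : Submodule.Quotient.mk (p := K) z = Submodule.Quotient.mk (p := K) w := by
        rw [← Submodule.mkQ_apply, ← Submodule.mkQ_apply]
        exact (hww.symm : π z = π w)
      exact (Submodule.Quotient.eq K).mp this
    have hmem := Submodule.add_mem_sup hw hsub
    have heq : w + (z - w) = z := by abel
    rwa [heq] at hmem
  -- Stage 2: successive approximation
  refine ⟨s', hs'co, ?_⟩
  intro z hz
  have hspanker : Submodule.span ARing (s' : Set (C (i+1))) ≤ LinearMap.ker (d (i+1)) :=
    Submodule.span_le.mpr (fun x hx => LinearMap.mem_ker.mpr (hs'co x hx))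
  have hdec : ∀ w : C (i+1), d (i+1) w = 0 →
      ∃ p c' w', p ∈ Submodule.span ARing (s' : Set (C (i+1))) ∧ d (i+1) w' = 0 ∧
        w = p + d i c' + qA • w' := by
    intro w hw
    have h1 := hgen w hw
    rw [Submodule.mem_sup] at h1
    obtain ⟨p, hp, kk, hkk, hsum⟩ := h1
    rw [hK, Submodule.mem_sup] at hkk
    obtain ⟨dc, hdc, qq, hqq, rfl⟩ := hkk
    obtain ⟨c', rfl⟩ := hdc
    rw [hI, mem_span_smul_top_iff] at hqq
    obtain ⟨w', rfl⟩ := hqq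
    have hw2 : d (i+1) (p + (d i c' + qA • w')) = 0 := by rw [hsum]; exact hw
    have hp0 : d (i+1) p = 0 := LinearMap.mem_ker.mp (hspanker hp)
    have h2 : qA • d (i+1) w' = 0 := by
      have h3 := hw2
      rw [map_add, map_add, map_smul, hp0, hd i c', zero_add, zero_add] at h3
      exact h3
    refine ⟨p, c', w', hp, htf _ _ h2, ?_⟩
    rw [← hsum]
    abel
  choose pf cf wf hpf hwf heqf using hdec
  set W : ℕ → {x : C (i+1) // d (i+1) x = 0} :=
    fun n => Nat.rec ⟨z, hz⟩ (fun _ prev => ⟨wf prev.1 prev.2, hwf prev.1 prev.2⟩) n with hWdef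
  have hWsucc : ∀ n, ((W (n+1) : {x : C (i+1) // d (i+1) x = 0}) : C (i+1))
      = wf (W n).1 (W n).2 := fun n => rfl
  set pn : ℕ → C (i+1) := fun n => pf (W n).1 (W n).2 with hpn
  set cn : ℕ → C i := fun n => cf (W n).1 (W n).2 with hcn
  have hWrec : ∀ n, (W n).1 = pn n + d i (cn n) + qA • (W (n+1)).1 := by
    intro n
    rw [hWsucc n]
    exact heqf (W n).1 (W n).2
  have hpnmem : ∀ n, pn n ∈ Submodule.span ARing (s' : Set (C (i+1))) := fun n => hpf _ _
  set pS : ℕ → C (i+1) := fun N => ∑ k ∈ Finset.range N, qA ^ k • pn k with hpS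
  set cS : ℕ → C i := fun N => ∑ k ∈ Finset.range N, qA ^ k • cn k with hcS
  have hW0 : (W 0).1 = z := rfl
  have hzN : ∀ N, z = pS N + d i (cS N) + qA ^ N • (W N).1 := by
    intro N
    induction N with
    | zero => simp [hpS, hcS, hW0]
    | succ N ih =>
      conv_lhs => rw [ih]
      rw [hWrec N]
      simp only [hpS, hcS]
      rw [Finset.sum_range_succ, Finset.sum_range_succ,
        map_add, map_smul, smul_add, smul_add, smul_smul, ← pow_succ]
      abel
  have hpcoef : ∀ n, ∃ f : C (i+1) → ARing, ∑ g ∈ s', f g • g = pn n := fun n =>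
    (mem_span_finset.mp (hpnmem n)).imp fun _ h => h.2
  choose fc hfc using hpcoef
  set F : ℕ → C (i+1) → ARing := fun N g => ∑ k ∈ Finset.range N, qA ^ k * fc k g with hF
  have hFcoh : ∀ (g : C (i+1)) {m n : ℕ}, m ≤ n →
      F m g ≡ F n g [SMOD ((Ideal.span {qA}) ^ m • ⊤ : Submodule ARing ARing)] := by
    intro g m n hmn
    rw [SModEq.sub_mem]
    have hdiff : F n g - F m g = ∑ k ∈ Finset.Ico m n, qA ^ k * fc k g := by
      simp only [hF]
      rw [← Finset.sum_range_add_sum_Ico _ hmn]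
      ring
    have hmem : F n g - F m g ∈ (Ideal.span {qA}) ^ m := by
      rw [hdiff]
      apply Submodule.sum_mem
      intro k hk
      rw [Ideal.span_singleton_pow, Ideal.mem_span_singleton]
      exact dvd_mul_of_dvd_left (pow_dvd_pow qA (Finset.mem_Ico.mp hk).1) _
    have hmem2 : F m g - F n g ∈ (Ideal.span {qA}) ^ m := by
      have := neg_mem hmem
      simpa using this
    simpa [smul_eq_mul, Ideal.mul_top] using hmem2
  have hAex : ∀ g : C (i+1), ∃ a : ARing, ∀ n,
      F n g ≡ a [SMOD ((Ideal.span {qA}) ^ n • ⊤ : Submodule ARing ARing)] := by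
    intro g
    exact precARing.prec (fun {m n} hmn => hFcoh g hmn)
  choose aa haa using hAex
  have hccoh : ∀ {m n : ℕ}, m ≤ n → cS m ≡ cS n [SMOD (I ^ m • ⊤ : Submodule ARing (C i))] := by
    intro m n hmn
    rw [SModEq.sub_mem]
    have hdiff : cS n - cS m = ∑ k ∈ Finset.Ico m n, qA ^ k • cn k := by
      simp only [hcS]
      rw [← Finset.sum_range_add_sum_Ico _ hmn]
      abel
    have hmem : cS n - cS m ∈ (I ^ m • ⊤ : Submodule ARing (C i)) := by
      rw [hdiff]
      apply Submodule.sum_mem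
      intro k hk
      have hq : qA ^ k ∈ I ^ m := by
        rw [hI, Ideal.span_singleton_pow, Ideal.mem_span_singleton]
        exact pow_dvd_pow qA (Finset.mem_Ico.mp hk).1
      exact Submodule.smul_mem_smul hq Submodule.mem_top
    have := neg_mem hmem
    simpa using this
  obtain ⟨cL, hcL⟩ := (hcomp i).toIsPrecomplete.prec (fun {m n} hmn => hccoh hmn)
  set y : C (i+1) := (∑ g ∈ s', aa g • g) + d i cL with hy
  have hyin : y ∈ Submodule.span ARing (s' : Set (C (i+1))) ⊔ LinearMap.range (d i) := by
    apply Submodule.add_mem_sup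
    · exact Submodule.sum_mem _ (fun g hg => Submodule.smul_mem _ _
        (Submodule.subset_span (Finset.mem_coe.mpr hg)))
    · exact ⟨cL, rfl⟩
  have hpSF : ∀ N, pS N = ∑ g ∈ s', F N g • g := by
    intro N
    simp only [hpS, hF]
    calc ∑ k ∈ Finset.range N, qA ^ k • pn k
        = ∑ k ∈ Finset.range N, ∑ g ∈ s', (qA ^ k * fc k g) • g := by
          refine Finset.sum_congr rfl (fun k _ => ?_)
          rw [← hfc k, Finset.smul_sum]
          simp_rw [smul_smul]
      _ = ∑ g ∈ s', ∑ k ∈ Finset.range N, (qA ^ k * fc k g) • g := Finset.sum_comm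
      _ = ∑ g ∈ s', (∑ k ∈ Finset.range N, qA ^ k * fc k g) • g := by
          refine Finset.sum_congr rfl (fun g _ => ?_)
          rw [Finset.sum_smul]
  have hfinal : z - y = 0 := by
    apply (hcomp (i+1)).toIsHausdorff.haus
    intro N
    rw [SModEq.zero]
    have hre : z - y = (pS N - ∑ g ∈ s', aa g • g) + d i (cS N - cL) + qA ^ N • (W N).1 := by
      rw [map_sub]
      conv_lhs => rw [hzN N, hy]
      abel
    rw [hre]
    refine Submodule.add_mem _ (Submodule.add_mem _ ?_ ?_) ?_
    · rw [hpSF N, ← Finset.sum_sub_distrib]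
      apply Submodule.sum_mem
      intro g hg
      rw [← sub_smul]
      have hmem : F N g - aa g ∈ I ^ N := by
        have := (SModEq.sub_mem).mp (haa g N)
        rw [← hI] at this
        simpa [smul_eq_mul, Ideal.mul_top] using this
      exact Submodule.smul_mem_smul hmem Submodule.mem_top
    · have hmem : cS N - cL ∈ (I ^ N • ⊤ : Submodule ARing (C i)) := (SModEq.sub_mem).mp (hcL N)
      rw [hI, mem_span_pow_smul_top_iff] at hmem
      obtain ⟨y0, hy0⟩ := hmem
      rw [hI, mem_span_pow_smul_top_iff]
      exact ⟨d i y0, by rw [hy0, map_smul]⟩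
    · rw [hI, mem_span_pow_smul_top_iff]
      exact ⟨(W N).1, rfl⟩
  have hzy : z = y := by
    have := sub_eq_zero.mp hfinal
    exact this
  rw [hzy]
  exact hyin

end
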